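/- For all integers n ≥ 1 and 1 ≤ j ≤ n, the sum over all non-ascending tuples (b₁,…,b_{n-j+1}) of positive integers with b₁ + ⋯ + b_{n-j+1} = n of n·(n-j)!·(j-1)! / f(b₁,…,b_{n-j+1}) equals n(n-1)⋯(n-j+2), the falling factorial with j-1 factors. -/

import Mathlib

open scoped Classical

/-- `f(b₁,…,b_m) = ∏_{k ≥ 1} n_k!` where `n_k` is the multiplicity of `k`. -/
def fMult (m : Multiset ℕ) : ℕ := m.toFinset.prod fun k => (m.count k).factorial


lemma map_univ_eq_ofFn (m : ℕ) (b : Fin m → ℕ) :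
    (Multiset.map b Finset.univ.val : Multiset ℕ) = ↑(List.ofFn b) := by
  have : (Finset.univ.val : Multiset (Fin m)) = ↑(List.finRange m) := rfl
  rw [this, List.ofFn_eq_map]
  rfl

lemma antitone_unique {m : ℕ} {b c : Fin m → ℕ} (hb : Antitone b) (hc : Antitone c)
    (h : Multiset.map b Finset.univ.val = Multiset.map c Finset.univ.val) : b = c := by
  have hp : (List.ofFn b).Perm (List.ofFn c) := by
    rw [map_univ_eq_ofFn, map_univ_eq_ofFn] at h
    exact Quotient.exact h
  have hs : List.ofFn b = List.ofFn c := by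
    apply List.Perm.eq_of_pairwise' (r := (· ≥ ·)) ?_ ?_ hp
    · rw [List.pairwise_ofFn]; exact fun i j hij => hb hij.le
    · rw [List.pairwise_ofFn]; exact fun i j hij => hc hij.le
  exact List.ofFn_injective hs

lemma fMult_eq_stab (m : ℕ) (b : Fin m → ℕ) :
    fMult (Multiset.map b Finset.univ.val) = Fintype.card {g : Equiv.Perm (Fin m) // b ∘ g = b} := by
  rw [DomMulAct.stabilizer_card' b]
  unfold fMult
  have h1 : (Multiset.map b Finset.univ.val).toFinset = Finset.image b Finset.univ := rfl
  rw [h1]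
  refine Finset.prod_congr rfl fun i _ => ?_
  congr 1
  rw [Fintype.card_subtype, Multiset.count_map]
  simp only [Finset.card, Finset.filter_val]
  exact congrArg Multiset.card (Multiset.filter_congr (fun x _ => eq_comm))

lemma exists_perm_comp {m : ℕ} (b c : Fin m → ℕ)
    (h : Multiset.map c Finset.univ.val = Multiset.map b Finset.univ.val) :
    ∃ τ : Equiv.Perm (Fin m), b ∘ τ = c := by
  have hcard : ∀ i : ℕ, Fintype.card {a // c a = i} = Fintype.card {a // b a = i} := by
    intro i
    have := congrArg (Multiset.count i) h
    rw [Multiset.count_map, Multiset.count_map] at this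
    rw [Fintype.card_subtype, Fintype.card_subtype]
    simpa [Finset.card, Finset.filter_val,
      Multiset.filter_congr (fun x (_ : x ∈ Finset.univ.val) => (eq_comm : (c x = i) ↔ _)),
      Multiset.filter_congr (fun x (_ : x ∈ Finset.univ.val) => (eq_comm : (b x = i) ↔ _))]
      using this
  have e : ∀ i : ℕ, {a // c a = i} ≃ {a // b a = i} :=
    fun i => Fintype.equivOfCardEq (hcard i)
  exact ⟨Equiv.ofFiberEquiv e, funext fun a => Equiv.ofFiberEquiv_map e a⟩

lemma map_comp_perm {m : ℕ} (b : Fin m → ℕ) (σ : Equiv.Perm (Fin m)) :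
    Multiset.map (b ∘ σ) Finset.univ.val = Multiset.map b Finset.univ.val := by
  rw [← Multiset.map_map]
  congr 1
  have : (Finset.univ.map σ.toEmbedding).val = Finset.univ.val := by
    rw [Finset.map_univ_equiv]
  simpa [Finset.map_val] using this

lemma fiber_perm_card {m : ℕ} (b c : Fin m → ℕ)
    (h : Multiset.map c Finset.univ.val = Multiset.map b Finset.univ.val) :
    (Finset.univ.filter fun σ : Equiv.Perm (Fin m) => b ∘ σ = c).card
      = fMult (Multiset.map b Finset.univ.val) := by
  obtain ⟨τ, hτ⟩ := exists_perm_comp b c h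
  rw [fMult_eq_stab, Fintype.card_subtype]
  apply Finset.card_bij' (fun σ _ => σ * τ⁻¹) (fun σ _ => σ * τ)
  · intro σ hσ
    simp only [Finset.mem_filter, Finset.mem_univ, true_and] at hσ ⊢
    funext x
    have h1 := congrFun hσ (τ⁻¹ x)
    have h2 := congrFun hτ (τ⁻¹ x)
    simp only [Function.comp, Equiv.Perm.coe_mul] at h1 h2 ⊢
    rw [h1, ← h2]
    simp
  · intro σ hσ
    simp only [Finset.mem_filter, Finset.mem_univ, true_and] at hσ ⊢
    funext x
    have h1 := congrFun hσ (τ x)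
    have h2 := congrFun hτ x
    simpa [Function.comp] using h1.trans h2
  · intro σ _; group
  · intro σ _; group

lemma length_adT (k : ℕ) : ∀ n, (List.Nat.antidiagonalTuple (k+1) n).length = (n + k).choose n := by
  induction k with
  | zero => intro n; simp
  | succ k ih =>
    intro n
    rw [show List.Nat.antidiagonalTuple (k+1+1) n = (List.Nat.antidiagonal n).flatMap
        (fun ni => (List.Nat.antidiagonalTuple (k+1) ni.2).map
          fun x : Fin (k+1) → ℕ => (Fin.cons ni.1 x : Fin (k+2) → ℕ)) from rfl]
    rw [List.length_flatMap]
    have h1 : (List.Nat.antidiagonal n).map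
        (fun ni => ((List.Nat.antidiagonalTuple (k+1) ni.2).map
          fun x : Fin (k+1) → ℕ => (Fin.cons ni.1 x : Fin (k+2) → ℕ)).length)
        = (List.range (n+1)).map (fun i => ((n - i) + k).choose (n - i)) := by
      rw [List.Nat.antidiagonal, List.map_map]
      exact List.map_congr_left fun i _ => by simp [ih]
    rw [h1]
    have h2 : ((List.range (n+1)).map (fun i => ((n - i) + k).choose (n - i))).sum
        = ∑ i ∈ Finset.range (n+1), ((n - i) + k).choose (n - i) := by
      simp [Finset.sum, Finset.range_val, Multiset.range, Multiset.map_coe, Multiset.sum_coe]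
    rw [h2]
    have h3 : ∑ i ∈ Finset.range (n+1), ((n - i) + k).choose (n - i)
        = ∑ i ∈ Finset.range (n+1), (i + k).choose i := by
      have := Finset.sum_range_reflect (fun i => (i + k).choose i) (n+1)
      simpa using this
    rw [h3]
    have h4 : ∀ i, (i + k).choose i = (i + k).choose k := by
      intro i
      have := Nat.choose_symm (Nat.le_add_left k i)
      simpa using this
    simp_rw [h4]
    rw [Nat.sum_range_add_choose n k]
    have := Nat.choose_symm (n := n + k + 1) (k := k + 1) (by omega)
    simpa [show n + k + 1 - (k+1) = n by omega, show n + (k+1) = n + k + 1 by omega] using this.symm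

lemma card_adT (k n : ℕ) : (Finset.Nat.antidiagonalTuple (k+1) n).card = (n + k).choose n := by
  have : (Finset.Nat.antidiagonalTuple (k+1) n).card
      = (List.Nat.antidiagonalTuple (k+1) n).length := rfl
  rw [this, length_adT]

noncomputable def sortT {m : ℕ} (c : Fin m → ℕ) : Fin m → ℕ :=
  fun x => c (Tuple.sort c (Fin.rev x))

lemma sortT_antitone {m : ℕ} (c : Fin m → ℕ) : Antitone (sortT c) := by
  intro x y hxy
  have hmono := Tuple.monotone_sort c
  have h : Fin.rev y ≤ Fin.rev x := Fin.rev_le_rev.mpr hxy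
  exact hmono h

lemma sortT_map {m : ℕ} (c : Fin m → ℕ) :
    Multiset.map (sortT c) Finset.univ.val = Multiset.map c Finset.univ.val :=
  map_comp_perm c (Fin.revPerm.trans (Tuple.sort c))

lemma sortT_fix {m : ℕ} (b : Fin m → ℕ) (hb : Antitone b) : sortT b = b :=
  antitone_unique (sortT_antitone b) hb (sortT_map b)

lemma sum_shift {m : ℕ} (b : Fin m → ℕ) (hpos : ∀ r, 1 ≤ b r) :
    ∑ r, b r = (∑ r, (b r - 1)) + m := by
  have : ∀ r : Fin m, b r = (b r - 1) + 1 := fun r => by have := hpos r; omega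
  calc ∑ r, b r = ∑ r, ((b r - 1) + 1) := Finset.sum_congr rfl fun r _ => this r
    _ = (∑ r, (b r - 1)) + ∑ _r : Fin m, 1 := Finset.sum_add_distrib
    _ = (∑ r, (b r - 1)) + m := by simp

lemma S_card (n j : ℕ) (hn : 1 ≤ n) (hj : 1 ≤ j) (hjn : j ≤ n) :
    ((Finset.Nat.antidiagonalTuple (n-j+1) n).filter (fun b => ∀ r, 1 ≤ b r)).card
      = (n-1).choose (j-1) := by
  have hcard : (Finset.Nat.antidiagonalTuple (n-j+1) (j-1)).card = (n-1).choose (j-1) := by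
    have := card_adT (n-j) (j-1)
    rw [show (j-1) + (n-j) = n-1 by omega] at this
    exact this
  rw [← hcard]
  apply Finset.card_bij' (fun b _ => fun r => b r - 1) (fun c _ => fun r => c r + 1)
  · intro b hb
    rw [Finset.mem_filter] at hb
    funext r
    have := hb.2 r
    show b r - 1 + 1 = b r
    omega
  · intro c _
    funext r
    show c r + 1 - 1 = c r
    omega
  · intro b hb
    rw [Finset.mem_filter, Finset.Nat.mem_antidiagonalTuple] at hb
    rw [Finset.Nat.mem_antidiagonalTuple]
    have := sum_shift b hb.2
    rw [hb.1] at this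
    omega
  · intro c hc
    rw [Finset.Nat.mem_antidiagonalTuple] at hc
    rw [Finset.mem_filter, Finset.Nat.mem_antidiagonalTuple]
    refine ⟨?_, fun r => by show 1 ≤ c r + 1; omega⟩
    rw [Finset.sum_add_distrib, hc]
    simp
    omega


/-- Summing `n·(n-j)!·(j-1)!/f(b₁,…,b_{n-j+1})` over all non-ascending tuples
`(b₁,…,b_{n-j+1})` of positive integers with `b₁+⋯+b_{n-j+1} = n` gives the
falling factorial `n(n-1)⋯(n-j+2)` (with `j-1` factors). -/
theorem sum_over_kreweras_types (n j : ℕ) (hn : 1 ≤ n) (hj : 1 ≤ j) (hjn : j ≤ n) :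
    ∑ b ∈ (Finset.Nat.antidiagonalTuple (n - j + 1) n).filter
        (fun b => (∀ r s : Fin (n - j + 1), r ≤ s → b s ≤ b r) ∧ ∀ r, 1 ≤ b r),
      ((n : ℚ) * ((n - j).factorial : ℚ) * ((j - 1).factorial : ℚ)) /
        (fMult (Multiset.map b Finset.univ.val) : ℚ) =
    (Nat.descFactorial n (j - 1) : ℚ) := by
  classical
  set m := n - j + 1 with hm
  set S := (Finset.Nat.antidiagonalTuple m n).filter (fun b => ∀ r, 1 ≤ b r) with hS
  set T := (Finset.Nat.antidiagonalTuple m n).filter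
      (fun b => (∀ r s : Fin m, r ≤ s → b s ≤ b r) ∧ ∀ r, 1 ≤ b r) with hT
  set K : ℚ := (n : ℚ) * ((n - j).factorial : ℚ) * ((j - 1).factorial : ℚ) with hK
  have stepA : ∀ b ∈ T,
      (S.filter (fun c => Multiset.map c Finset.univ.val
          = Multiset.map b Finset.univ.val)).card
        * fMult (Multiset.map b Finset.univ.val) = m.factorial := by
    intro b hb
    rw [hT, Finset.mem_filter, Finset.Nat.mem_antidiagonalTuple] at hb
    obtain ⟨hsum, _, hpos⟩ := hb
    have hmaps : ∀ σ : Equiv.Perm (Fin m), σ ∈ Finset.univ →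
        b ∘ σ ∈ S.filter (fun c => Multiset.map c Finset.univ.val
          = Multiset.map b Finset.univ.val) := by
      intro σ _
      rw [Finset.mem_filter, hS, Finset.mem_filter, Finset.Nat.mem_antidiagonalTuple]
      exact ⟨⟨by rw [← hsum]; exact Equiv.sum_comp σ b, fun r => hpos _⟩, map_comp_perm b σ⟩
    have hcard := Finset.card_eq_sum_card_fiberwise hmaps
    rw [Finset.card_univ, Fintype.card_perm, Fintype.card_fin] at hcard
    have hfib : ∀ c ∈ S.filter (fun c => Multiset.map c Finset.univ.val
        = Multiset.map b Finset.univ.val),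
        (Finset.univ.filter fun σ : Equiv.Perm (Fin m) => b ∘ σ = c).card
          = fMult (Multiset.map b Finset.univ.val) :=
      fun c hc => fiber_perm_card b c (Finset.mem_filter.mp hc).2
    rw [Finset.sum_congr rfl hfib, Finset.sum_const, smul_eq_mul] at hcard
    exact hcard.symm
  have stepB : S.card = ∑ b ∈ T, (S.filter (fun c => Multiset.map c Finset.univ.val
      = Multiset.map b Finset.univ.val)).card := by
    have hmaps : ∀ c ∈ S, sortT c ∈ T := by
      intro c hc
      rw [hS, Finset.mem_filter, Finset.Nat.mem_antidiagonalTuple] at hc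
      rw [hT, Finset.mem_filter, Finset.Nat.mem_antidiagonalTuple]
      refine ⟨?_, fun r s hrs => sortT_antitone c hrs, fun r => hc.2 _⟩
      rw [← hc.1]
      exact Equiv.sum_comp (Fin.revPerm.trans (Tuple.sort c)) c
    rw [Finset.card_eq_sum_card_fiberwise hmaps]
    refine Finset.sum_congr rfl fun b hb => ?_
    congr 1
    ext c
    simp only [Finset.mem_filter]
    constructor
    · rintro ⟨hcS, rfl⟩
      exact ⟨hcS, (sortT_map c).symm⟩
    · rintro ⟨hcS, hmapeq⟩
      have hbanti : Antitone b := fun r s hrs => (Finset.mem_filter.mp hb).2.1 r s hrs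
      exact ⟨hcS, antitone_unique (sortT_antitone c) hbanti ((sortT_map c).trans hmapeq)⟩
  have hmfac : ((m.factorial : ℚ)) ≠ 0 := by exact_mod_cast m.factorial_pos.ne'
  have step1 : ∀ b ∈ T, K / (fMult (Multiset.map b Finset.univ.val) : ℚ)
      = K * ((S.filter (fun c => Multiset.map c Finset.univ.val
          = Multiset.map b Finset.univ.val)).card : ℚ) / (m.factorial : ℚ) := by
    intro b hb
    have hA := stepA b hb
    have hfM : (0:ℚ) < (fMult (Multiset.map b Finset.univ.val) : ℚ) := by
      have : 0 < fMult (Multiset.map b Finset.univ.val) :=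
        Finset.prod_pos fun _ _ => Nat.factorial_pos _
      exact_mod_cast this
    rw [div_eq_div_iff hfM.ne' hmfac]
    have : ((S.filter (fun c => Multiset.map c Finset.univ.val
        = Multiset.map b Finset.univ.val)).card : ℚ)
        * (fMult (Multiset.map b Finset.univ.val) : ℚ) = (m.factorial : ℚ) := by
      exact_mod_cast congrArg (fun x : ℕ => (x : ℚ)) hA
    calc K * (m.factorial : ℚ) = K * (((S.filter (fun c => Multiset.map c Finset.univ.val
          = Multiset.map b Finset.univ.val)).card : ℚ)
          * (fMult (Multiset.map b Finset.univ.val) : ℚ)) := by rw [this]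
      _ = K * ((S.filter (fun c => Multiset.map c Finset.univ.val
          = Multiset.map b Finset.univ.val)).card : ℚ)
          * (fMult (Multiset.map b Finset.univ.val) : ℚ) := by ring
  rw [Finset.sum_congr rfl step1]
  rw [← Finset.sum_div, ← Finset.mul_sum, ← Nat.cast_sum, ← stepB, S_card n j hn hj hjn]
  have key : n * (n-j).factorial * (j-1).factorial * ((n-1).choose (j-1))
      = n.descFactorial (j-1) * m.factorial := by
    have e1 := Nat.choose_mul_factorial_mul_factorial (show j-1 ≤ n-1 by omega)
    rw [show n-1-(j-1) = n-j by omega] at e1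
    have e2 := Nat.factorial_mul_descFactorial (show j-1 ≤ n by omega)
    rw [show n-(j-1) = m by omega] at e2
    have e3 : n * (n-1).factorial = n.factorial := Nat.mul_factorial_pred (by omega)
    calc n * (n-j).factorial * (j-1).factorial * ((n-1).choose (j-1))
        = n * ((n-1).choose (j-1) * (j-1).factorial * (n-j).factorial) := by ring
      _ = n * (n-1).factorial := by rw [e1]
      _ = n.factorial := e3
      _ = m.factorial * n.descFactorial (j-1) := e2.symm
      _ = n.descFactorial (j-1) * m.factorial := mul_comm _ _
  rw [div_eq_iff hmfac, hK]
  push_cast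
  exact_mod_cast congrArg (fun x : ℕ => (x : ℚ)) key
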